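/- Let O_1, …, O_T : [0,1] → ℝ be continuously differentiable functions, let w_1, …, w_T be nonnegative reals with ∑_{t=1}^T w_t > 0, and fix h > 0. Then the function k ↦ ∑_{t=1}^T w_t ∫_0^1 (O_t'(τ) − h(k − O_t(τ)))² dτ on ℝ has a unique global minimizer, namely k* = (∑_{t=1}^T w_t [ (O_t(1) − O_t(0)) + h ∫_0^1 O_t(τ) dτ ]) / (h ∑_{t=1}^T w_t). -/

import Mathlib

/-- Reestimation of the Ornstein–Uhlenbeck mean parameter with concentration `h`
held fixed: `k ↦ ∑ w t * ∫₀¹ (O t'(τ) − h(k − O t τ))² dτ` has the unique global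
minimizer `k* = ∑ w t [(O t 1 − O t 0) + h ∫₀¹ O t] / (h ∑ w t)`. -/
theorem stmt_9 (T : ℕ) (O : Fin T → ℝ → ℝ) (hO : ∀ t, ContDiff ℝ 1 (O t))
    (w : Fin T → ℝ) (hw : ∀ t, 0 ≤ w t) (hpos : 0 < ∑ t, w t)
    (h : ℝ) (hh : 0 < h) :
    let g : ℝ → ℝ := fun k =>
      ∑ t, w t * ∫ τ in (0:ℝ)..1, (deriv (O t) τ - h * (k - O t τ)) ^ 2
    let kstar : ℝ :=
      (∑ t, w t * ((O t 1 - O t 0) + h * ∫ τ in (0:ℝ)..1, O t τ)) / (h * ∑ t, w t)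
    (∀ k, g kstar ≤ g k) ∧ (∀ k, g k = g kstar ↔ k = kstar) := by
  intro g kstar
  set S : ℝ := ∑ t, w t with hS
  set B : ℝ := ∑ t, w t * ((O t 1 - O t 0) + h * ∫ τ in (0:ℝ)..1, O t τ) with hB
  have hcont : ∀ t, Continuous (O t) := fun t => (hO t).continuous
  have hcd : ∀ t, Continuous (deriv (O t)) := fun t => (hO t).continuous_deriv le_rfl
  -- u t := deriv (O t) + h * O t, its integral is the bracket
  have hu : ∀ t, Continuous (fun τ => deriv (O t) τ + h * O t τ) :=
    fun t => (hcd t).add (continuous_const.mul (hcont t))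
  have hintu : ∀ t, (∫ τ in (0:ℝ)..1, (deriv (O t) τ + h * O t τ))
      = (O t 1 - O t 0) + h * ∫ τ in (0:ℝ)..1, O t τ := by
    intro t
    rw [intervalIntegral.integral_add (f := fun τ => deriv (O t) τ) (g := fun τ => h * O t τ)
      (((hcd t)).intervalIntegrable _ _)
      ((continuous_const.mul (hcont t)).intervalIntegrable _ _),
      intervalIntegral.integral_const_mul,
      intervalIntegral.integral_deriv_eq_sub
        (fun x _ => (hO t).differentiable one_ne_zero x)
        (((hcd t)).intervalIntegrable _ _)]
  -- per-t expansion
  have hexp : ∀ t k, (∫ τ in (0:ℝ)..1, (deriv (O t) τ - h * (k - O t τ)) ^ 2)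
      = (∫ τ in (0:ℝ)..1, (deriv (O t) τ + h * O t τ) ^ 2)
        - 2 * h * k * ((O t 1 - O t 0) + h * ∫ τ in (0:ℝ)..1, O t τ)
        + (h * k) ^ 2 := by
    intro t k
    have hrw : (fun τ => (deriv (O t) τ - h * (k - O t τ)) ^ 2)
        = fun τ => (deriv (O t) τ + h * O t τ) ^ 2
          - 2 * h * k * (deriv (O t) τ + h * O t τ) + (h * k) ^ 2 := by
      funext τ; ring
    rw [show (∫ τ in (0:ℝ)..1, (deriv (O t) τ - h * (k - O t τ)) ^ 2)
        = ∫ τ in (0:ℝ)..1, ((deriv (O t) τ + h * O t τ) ^ 2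
          - 2 * h * k * (deriv (O t) τ + h * O t τ) + (h * k) ^ 2) from by rw [hrw]]
    rw [intervalIntegral.integral_add
        (f := fun τ => (deriv (O t) τ + h * O t τ) ^ 2 - 2 * h * k * (deriv (O t) τ + h * O t τ))
        (g := fun _ => (h * k) ^ 2)
        ((((hu t).pow 2).sub (continuous_const.mul (hu t))).intervalIntegrable _ _)
        (intervalIntegrable_const),
      intervalIntegral.integral_sub (f := fun τ => (deriv (O t) τ + h * O t τ) ^ 2)
        (g := fun τ => 2 * h * k * (deriv (O t) τ + h * O t τ))
        (((hu t).pow 2).intervalIntegrable _ _)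
        ((continuous_const.mul (hu t)).intervalIntegrable _ _),
      intervalIntegral.integral_const_mul, intervalIntegral.integral_const, hintu]
    simp
  -- quadratic form of g
  have hg : ∀ k, g k = (∑ t, w t * ∫ τ in (0:ℝ)..1, (deriv (O t) τ + h * O t τ) ^ 2)
      - 2 * h * k * B + (h * k) ^ 2 * S := by
    intro k
    simp only [g, hB, hS]
    rw [Finset.mul_sum, Finset.mul_sum, ← Finset.sum_sub_distrib, ← Finset.sum_add_distrib]
    refine Finset.sum_congr rfl fun t _ => ?_
    rw [hexp t k]; ring
  have hSne : (h * S) ≠ 0 := by positivity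
  have hBk : B = kstar * (h * S) := by
    rw [show kstar = B / (h * S) from rfl, div_mul_cancel₀ _ hSne]
  have key : ∀ k, g k = g kstar + h ^ 2 * S * (k - kstar) ^ 2 := by
    intro k
    rw [hg k, hg kstar, hBk]; ring
  have hSpos : 0 < S := hpos
  constructor
  · intro k
    rw [key k]
    have : 0 ≤ h ^ 2 * S * (k - kstar) ^ 2 := by positivity
    linarith
  · intro k
    constructor
    · intro hk
      rw [key k] at hk
      have : h ^ 2 * S * (k - kstar) ^ 2 = 0 := by linarith
      have h2 : (k - kstar) ^ 2 = 0 := by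
        have : h ^ 2 * S ≠ 0 := by positivity
        exact by
          rcases mul_eq_zero.mp ‹h ^ 2 * S * (k - kstar) ^ 2 = 0› with h' | h'
          · exact absurd h' this
          · exact h'
      have := pow_eq_zero_iff (n := 2) (by norm_num) |>.mp h2
      linarith
    · rintro rfl; rfl
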